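/- Let n ≥ 1 and f_1,...,f_n ∈ ℚ[x_1,...,x_n], and suppose d_1,...,d_n ≥ 1 are such that for all i, j the partial degree of f_i in the variable x_j is at most d_j. Then for each k ∈ {0,1,...,n} (with x_0 = 1), the Bezout polynomial δ(x_k) has partial degree in x_j at most j·d_j and partial degree in y_j at most (n - j + 1)·d_j, for every j ∈ {1,...,n}. -/

import Mathlib

open MvPolynomial

/-- Over `ℚ` (a domain), `degreeOf` is additive on products of nonzero polynomials. -/
lemma aux_degreeOf_mul_eq {σ : Type*} [Fintype σ] [DecidableEq σ]
    (v : σ) {p q : MvPolynomial σ ℚ} (hp : p ≠ 0) (hq : q ≠ 0) :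
    degreeOf v (p * q) = degreeOf v p + degreeOf v q := by
  obtain ⟨m, hm⟩ : ∃ m, Fintype.card σ = m + 1 :=
    ⟨Fintype.card σ - 1, (Nat.succ_pred_eq_of_pos (Fintype.card_pos_iff.mpr ⟨v⟩)).symm⟩
  let g : σ ≃ Fin (m + 1) := Fintype.equivFinOfCardEq hm
  let e : σ ≃ Fin (m + 1) := g.trans (Equiv.swap (g v) 0)
  have hev : e v = 0 := by simp [e, Equiv.swap_apply_left]
  have key : ∀ φ : MvPolynomial σ ℚ,
      degreeOf v φ = (MvPolynomial.finSuccEquiv ℚ m (rename e φ)).natDegree := by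
    intro φ
    rw [natDegree_finSuccEquiv, ← hev, degreeOf_rename_of_injective e.injective]
  have hp' : MvPolynomial.finSuccEquiv ℚ m (rename (⇑e) p) ≠ 0 := by
    simp only [ne_eq, EmbeddingLike.map_eq_zero_iff]
    exact fun h => hp (rename_injective _ e.injective (by simpa using h))
  have hq' : MvPolynomial.finSuccEquiv ℚ m (rename (⇑e) q) ≠ 0 := by
    simp only [ne_eq, EmbeddingLike.map_eq_zero_iff]
    exact fun h => hq (rename_injective _ e.injective (by simpa using h))
  rw [key, key, key, map_mul, map_mul, Polynomial.natDegree_mul hp' hq']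

/-- Degree bound for a renaming along an injective map. -/
lemma aux_degreeOf_rename_le {σ τ : Type*} {g : σ → τ} (hg : Function.Injective g)
    (p : MvPolynomial σ ℚ) (w : τ) (d0 : ℕ) (hb : ∀ t, g t = w → degreeOf t p ≤ d0) :
    degreeOf w (rename g p) ≤ d0 := by
  classical
  by_cases hw : ∃ t, g t = w
  · obtain ⟨t, rfl⟩ := hw
    rw [degreeOf_rename_of_injective hg]
    exact hb t rfl
  · have hv : w ∉ (rename g p).vars := by
      intro h
      obtain ⟨t, _, ht⟩ := Finset.mem_image.mp (vars_rename g p h)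
      exact hw ⟨t, ht⟩
    have : degreeOf w (rename g p) = 0 := by
      rw [degreeOf_def]
      exact Multiset.count_eq_zero.mpr (fun h => hv (Multiset.mem_toFinset.mpr h))
    omega

/-- If each `f_i` has partial degree at most `d_j` in `x_j`, then for each
`k ∈ {0,1,…,n}` (with `x₀ = 1`), the Bezout polynomial `δ(x_k) = det Δ(x_k)` has partial
degree in `x_j` at most `j·d_j` and partial degree in `y_j` at most `(n - j + 1)·d_j`
(indices `j` written 1-based; here `j : Fin n` is 0-based, so the bounds read
`(j+1)·d_j` and `(n-j)·d_j`). The `x`-variables are indexed by `Sum.inl`, the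
`y`-variables by `Sum.inr`, and `k = 0` corresponds to the zero exponent vector. -/
theorem stmt_14 (n : ℕ) (hn : 1 ≤ n) (f : Fin n → MvPolynomial (Fin n) ℚ)
    (d : Fin n → ℕ) (hd : ∀ j : Fin n, 1 ≤ d j)
    (hdeg : ∀ i j : Fin n, degreeOf j (f i) ≤ d j)
    (k : Fin (n + 1)) (γ : Fin n → ℕ) (hγ : ∀ j : Fin n, γ j = if (j : ℕ) + 1 = (k : ℕ) then 1 else 0)
    (D : Matrix (Fin n) (Fin n) (MvPolynomial (Fin n ⊕ Fin n) ℚ))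
    (hD : ∀ i j : Fin n,
      (X (Sum.inl j) - X (Sum.inr j)) * D i j =
        (X (Sum.inr j)) ^ (γ j) *
          (aeval (fun t : Fin n =>
            if (t : ℕ) < (j : ℕ) then (X (Sum.inr t) : MvPolynomial (Fin n ⊕ Fin n) ℚ)
            else X (Sum.inl t)) (f i))
        - (X (Sum.inl j)) ^ (γ j) *
          (aeval (fun t : Fin n =>
            if (t : ℕ) ≤ (j : ℕ) then (X (Sum.inr t) : MvPolynomial (Fin n ⊕ Fin n) ℚ)
            else X (Sum.inl t)) (f i))) :
    ∀ j : Fin n,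
      degreeOf (Sum.inl j) D.det ≤ ((j : ℕ) + 1) * d j ∧
      degreeOf (Sum.inr j) D.det ≤ (n - (j : ℕ)) * d j := by
  classical
  have hγ1 : ∀ j : Fin n, γ j ≤ 1 := fun j => by rw [hγ j]; split <;> omega
  -- the rename maps
  set glt : Fin n → Fin n → Fin n ⊕ Fin n :=
    fun j' t => if (t : ℕ) < (j' : ℕ) then Sum.inr t else Sum.inl t with hglt_def
  set gle : Fin n → Fin n → Fin n ⊕ Fin n :=
    fun j' t => if (t : ℕ) ≤ (j' : ℕ) then Sum.inr t else Sum.inl t with hgle_def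
  have hglt_inj : ∀ j', Function.Injective (glt j') := by
    intro j' a b hab
    simp only [glt] at hab
    split_ifs at hab <;> simp_all
  have hgle_inj : ∀ j', Function.Injective (gle j') := by
    intro j' a b hab
    simp only [gle] at hab
    split_ifs at hab <;> simp_all
  have haelt : ∀ (j' : Fin n) (p : MvPolynomial (Fin n) ℚ),
      aeval (fun t : Fin n =>
        if (t : ℕ) < (j' : ℕ) then (X (Sum.inr t) : MvPolynomial (Fin n ⊕ Fin n) ℚ)
        else X (Sum.inl t)) p = rename (glt j') p := by
    intro j' p
    have hfun : (fun t : Fin n =>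
        if (t : ℕ) < (j' : ℕ) then (X (Sum.inr t) : MvPolynomial (Fin n ⊕ Fin n) ℚ)
        else X (Sum.inl t)) = X ∘ glt j' := by
      funext t
      simp only [Function.comp_apply, glt]
      exact (apply_ite X _ _ _).symm
    rw [hfun]
    induction p using MvPolynomial.induction_on <;> simp_all
  have haele : ∀ (j' : Fin n) (p : MvPolynomial (Fin n) ℚ),
      aeval (fun t : Fin n =>
        if (t : ℕ) ≤ (j' : ℕ) then (X (Sum.inr t) : MvPolynomial (Fin n ⊕ Fin n) ℚ)
        else X (Sum.inl t)) p = rename (gle j') p := by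
    intro j' p
    have hfun : (fun t : Fin n =>
        if (t : ℕ) ≤ (j' : ℕ) then (X (Sum.inr t) : MvPolynomial (Fin n ⊕ Fin n) ℚ)
        else X (Sum.inl t)) = X ∘ gle j' := by
      funext t
      simp only [Function.comp_apply, gle]
      exact (apply_ite X _ _ _).symm
    rw [hfun]
    induction p using MvPolynomial.induction_on <;> simp_all
  have hXne : ∀ j' : Fin n,
      (X (Sum.inl j') - X (Sum.inr j') : MvPolynomial (Fin n ⊕ Fin n) ℚ) ≠ 0 := by
    intro j'
    refine sub_ne_zero.mpr fun h => ?_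
    exact absurd (X_injective h) (by simp)
  have hEntry : ∀ (v : Fin n ⊕ Fin n) (i j' : Fin n),
      degreeOf v (D i j') ≤ degreeOf v ((X (Sum.inl j') - X (Sum.inr j')) * D i j') := by
    intro v i j'
    rcases eq_or_ne (D i j') 0 with h | h
    · simp [h]
    · rw [aux_degreeOf_mul_eq v (hXne j') h]
      exact Nat.le_add_left _ _
  -- generic determinant bound
  have hdet : ∀ (v : Fin n ⊕ Fin n) (b : Fin n → ℕ),
      (∀ i j', degreeOf v (D i j') ≤ b j') → degreeOf v D.det ≤ ∑ j', b j' := by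
    intro v b hb
    rw [Matrix.det_apply]
    refine (degreeOf_sum_le _ _ _).trans ?_
    apply Finset.sup_le
    intro σ _
    have hsm : (Equiv.Perm.sign σ) • (∏ i, D (σ i) i) =
        C (((Equiv.Perm.sign σ : ℤ) : ℚ)) * ∏ i, D (σ i) i := by
      rw [Units.smul_def, zsmul_eq_mul,
        map_intCast (C : ℚ →+* MvPolynomial (Fin n ⊕ Fin n) ℚ)]
    rw [hsm]
    refine (degreeOf_C_mul_le _ _ _).trans ?_
    refine (degreeOf_prod_le _ _ _).trans ?_
    exact Finset.sum_le_sum fun i _ => hb (σ i) i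
  intro j
  -- entry bounds in x_j
  have hEx : ∀ i j' : Fin n,
      degreeOf (Sum.inl j) (D i j') ≤ if (j' : ℕ) ≤ (j : ℕ) then d j else 0 := by
    intro i j'
    refine (hEntry _ i j').trans ?_
    rw [hD i j', haelt, haele]
    refine (degreeOf_sub_le _ _ _).trans (max_le ?_ ?_)
    · refine (degreeOf_mul_le _ _ _).trans ?_
      have h1 : degreeOf (Sum.inl j)
          ((X (Sum.inr j') : MvPolynomial (Fin n ⊕ Fin n) ℚ) ^ γ j') = 0 := by
        have h := degreeOf_pow_le (Sum.inl j)
          (X (Sum.inr j') : MvPolynomial (Fin n ⊕ Fin n) ℚ) (γ j')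
        rw [degreeOf_X] at h
        simp only [reduceCtorEq, if_false, Nat.mul_zero, Nat.le_zero] at h
        exact h
      have h2 : degreeOf (Sum.inl j) (rename (glt j') (f i)) ≤
          if (j' : ℕ) ≤ (j : ℕ) then d j else 0 := by
        apply aux_degreeOf_rename_le (hglt_inj j')
        intro t ht
        simp only [glt] at ht
        by_cases h : (t : ℕ) < (j' : ℕ)
        · rw [if_pos h] at ht
          exact absurd ht (by simp)
        · rw [if_neg h] at ht
          have htj : t = j := Sum.inl.inj ht
          have htj' : (t : ℕ) = (j : ℕ) := by rw [htj]
          rw [if_pos (by omega), htj]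
          exact hdeg i j
      split_ifs at h2 ⊢ <;> omega
    · refine (degreeOf_mul_le _ _ _).trans ?_
      have h1 : degreeOf (Sum.inl j)
          ((X (Sum.inl j') : MvPolynomial (Fin n ⊕ Fin n) ℚ) ^ γ j') ≤
          if (j : ℕ) = (j' : ℕ) then 1 else 0 := by
        have h := degreeOf_pow_le (Sum.inl j)
          (X (Sum.inl j') : MvPolynomial (Fin n ⊕ Fin n) ℚ) (γ j')
        rw [degreeOf_X] at h
        rcases eq_or_ne j j' with rfl | hne
        · rw [if_pos rfl] at h
          rw [if_pos rfl]
          exact h.trans (by simpa using hγ1 j)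
        · rw [if_neg (by simpa using hne)] at h
          rw [if_neg (fun hc => hne (Fin.ext hc))]
          omega
      have h2 : degreeOf (Sum.inl j) (rename (gle j') (f i)) ≤
          if (j' : ℕ) < (j : ℕ) then d j else 0 := by
        apply aux_degreeOf_rename_le (hgle_inj j')
        intro t ht
        simp only [gle] at ht
        by_cases h : (t : ℕ) ≤ (j' : ℕ)
        · rw [if_pos h] at ht
          exact absurd ht (by simp)
        · rw [if_neg h] at ht
          have htj : t = j := Sum.inl.inj ht
          have htj' : (t : ℕ) = (j : ℕ) := by rw [htj]
          rw [if_pos (by omega), htj]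
          exact hdeg i j
      have hdj := hd j
      split_ifs at h1 h2 ⊢ <;> omega
  -- entry bounds in y_j
  have hEy : ∀ i j' : Fin n,
      degreeOf (Sum.inr j) (D i j') ≤ if (j : ℕ) ≤ (j' : ℕ) then d j else 0 := by
    intro i j'
    refine (hEntry _ i j').trans ?_
    rw [hD i j', haelt, haele]
    refine (degreeOf_sub_le _ _ _).trans (max_le ?_ ?_)
    · refine (degreeOf_mul_le _ _ _).trans ?_
      have h1 : degreeOf (Sum.inr j)
          ((X (Sum.inr j') : MvPolynomial (Fin n ⊕ Fin n) ℚ) ^ γ j') ≤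
          if (j : ℕ) = (j' : ℕ) then 1 else 0 := by
        have h := degreeOf_pow_le (Sum.inr j)
          (X (Sum.inr j') : MvPolynomial (Fin n ⊕ Fin n) ℚ) (γ j')
        rw [degreeOf_X] at h
        rcases eq_or_ne j j' with rfl | hne
        · rw [if_pos rfl] at h
          rw [if_pos rfl]
          exact h.trans (by simpa using hγ1 j)
        · rw [if_neg (by simpa using hne)] at h
          rw [if_neg (fun hc => hne (Fin.ext hc))]
          omega
      have h2 : degreeOf (Sum.inr j) (rename (glt j') (f i)) ≤
          if (j : ℕ) < (j' : ℕ) then d j else 0 := by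
        apply aux_degreeOf_rename_le (hglt_inj j')
        intro t ht
        simp only [glt] at ht
        by_cases h : (t : ℕ) < (j' : ℕ)
        · rw [if_pos h] at ht
          have htj : t = j := Sum.inr.inj ht
          have htj' : (t : ℕ) = (j : ℕ) := by rw [htj]
          rw [if_pos (by omega), htj]
          exact hdeg i j
        · rw [if_neg h] at ht
          exact absurd ht (by simp)
      have hdj := hd j
      split_ifs at h1 h2 ⊢ <;> omega
    · refine (degreeOf_mul_le _ _ _).trans ?_
      have h1 : degreeOf (Sum.inr j)
          ((X (Sum.inl j') : MvPolynomial (Fin n ⊕ Fin n) ℚ) ^ γ j') = 0 := by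
        have h := degreeOf_pow_le (Sum.inr j)
          (X (Sum.inl j') : MvPolynomial (Fin n ⊕ Fin n) ℚ) (γ j')
        rw [degreeOf_X] at h
        simp only [reduceCtorEq, if_false, Nat.mul_zero, Nat.le_zero] at h
        exact h
      have h2 : degreeOf (Sum.inr j) (rename (gle j') (f i)) ≤
          if (j : ℕ) ≤ (j' : ℕ) then d j else 0 := by
        apply aux_degreeOf_rename_le (hgle_inj j')
        intro t ht
        simp only [gle] at ht
        by_cases h : (t : ℕ) ≤ (j' : ℕ)
        · rw [if_pos h] at ht
          have htj : t = j := Sum.inr.inj ht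
          have htj' : (t : ℕ) = (j : ℕ) := by rw [htj]
          rw [if_pos (by omega), htj]
          exact hdeg i j
        · rw [if_neg h] at ht
          exact absurd ht (by simp)
      split_ifs at h2 ⊢ <;> omega
  constructor
  · refine (hdet (Sum.inl j) _ hEx).trans (le_of_eq ?_)
    rw [Fin.sum_univ_eq_sum_range (fun i => if i ≤ (j : ℕ) then d j else 0) n]
    rw [Finset.sum_ite, Finset.sum_const, Finset.sum_const_zero, add_zero]
    have hf : (Finset.range n).filter (fun i => i ≤ (j : ℕ)) = Finset.range ((j : ℕ) + 1) := by
      ext a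
      simp only [Finset.mem_filter, Finset.mem_range]
      have := j.isLt
      omega
    rw [hf, Finset.card_range, smul_eq_mul]
  · refine (hdet (Sum.inr j) _ hEy).trans (le_of_eq ?_)
    rw [Fin.sum_univ_eq_sum_range (fun i => if (j : ℕ) ≤ i then d j else 0) n]
    rw [Finset.sum_ite, Finset.sum_const, Finset.sum_const_zero, add_zero]
    have hf : (Finset.range n).filter (fun i => (j : ℕ) ≤ i) = Finset.Ico (j : ℕ) n := by
      ext a
      simp only [Finset.mem_filter, Finset.mem_range, Finset.mem_Ico]
      omega
    rw [hf, Nat.card_Ico, smul_eq_mul]
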